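/- Let R be a commutative Armendariz ring, σ a ring endomorphism of R, and M an R-module satisfying the condition (C_σ^2): for all m ∈ M and a ∈ R, (σ(a)·a)·m = 0 implies σ(a)·m = 0. Then M is an Armendariz module if and only if the Nagata extension R⊕_σM is an Armendariz ring. -/

import Mathlib

/-- The Nagata extension `R ⊕_σ M` of a commutative ring `R` by an `R`-module `M` along a
ring endomorphism `σ` of `R`: the underlying additive group is `R × M`, with multiplication
`(a, m) * (b, n) = (a * b, σ a • n + b • m)`. -/
@[nolint unusedArguments]
def Nagata (R : Type*) [CommRing R] (σ : R →+* R) (M : Type*)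
    [AddCommGroup M] [Module R M] : Type _ := R × M

namespace Nagata

variable {R : Type*} [CommRing R] {σ : R →+* R} {M : Type*} [AddCommGroup M] [Module R M]

instance : AddCommGroup (Nagata R σ M) := inferInstanceAs (AddCommGroup (R × M))

/-- The element `(a, m)` of the Nagata extension. -/
def mk (a : R) (m : M) : Nagata R σ M := (a, m)

instance : Ring (Nagata R σ M) where
  __ := (inferInstance : AddCommGroup (Nagata R σ M))
  mul x y := (x.1 * y.1, σ x.1 • y.2 + y.1 • x.2)
  one := ((1 : R), (0 : M))
  left_distrib x y z := by
    refine Prod.ext ?_ ?_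
    · show x.1 * (y.1 + z.1) = x.1 * y.1 + x.1 * z.1; ring
    · show σ x.1 • (y.2 + z.2) + (y.1 + z.1) • x.2
          = (σ x.1 • y.2 + y.1 • x.2) + (σ x.1 • z.2 + z.1 • x.2)
      rw [smul_add, add_smul]; abel
  right_distrib x y z := by
    refine Prod.ext ?_ ?_
    · show (x.1 + y.1) * z.1 = x.1 * z.1 + y.1 * z.1; ring
    · show σ (x.1 + y.1) • z.2 + z.1 • (x.2 + y.2)
          = (σ x.1 • z.2 + z.1 • x.2) + (σ y.1 • z.2 + z.1 • y.2)
      rw [map_add, add_smul, smul_add]; abel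
  zero_mul x := by
    refine Prod.ext ?_ ?_
    · show (0 : R) * x.1 = 0; ring
    · show σ (0 : R) • x.2 + x.1 • (0 : M) = 0; simp
  mul_zero x := by
    refine Prod.ext ?_ ?_
    · show x.1 * (0 : R) = 0; ring
    · show σ x.1 • (0 : M) + (0 : R) • x.2 = 0; simp
  mul_assoc x y z := by
    refine Prod.ext ?_ ?_
    · show x.1 * y.1 * z.1 = x.1 * (y.1 * z.1); ring
    · show σ (x.1 * y.1) • z.2 + z.1 • (σ x.1 • y.2 + y.1 • x.2)
          = σ x.1 • (σ y.1 • z.2 + z.1 • y.2) + (y.1 * z.1) • x.2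
      rw [map_mul, mul_smul, smul_add, smul_add, mul_smul, smul_comm z.1 (σ x.1),
        smul_comm z.1 y.1]
      abel
  one_mul x := by
    refine Prod.ext ?_ ?_
    · show 1 * x.1 = x.1; ring
    · show σ 1 • x.2 + x.1 • (0 : M) = x.2; simp
  mul_one x := by
    refine Prod.ext ?_ ?_
    · show x.1 * 1 = x.1; ring
    · show σ x.1 • (0 : M) + (1 : R) • x.2 = x.2; simp

end Nagata


section Aux

namespace Nagata

open Polynomial Finset

variable {R : Type*} [CommRing R] {σ : R →+* R} {M : Type*} [AddCommGroup M] [Module R M]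

lemma mul_fst (x y : Nagata R σ M) : (x * y).1 = x.1 * y.1 := rfl

lemma mul_snd (x y : Nagata R σ M) : (x * y).2 = σ x.1 • y.2 + y.1 • x.2 := rfl

/-- The first projection as a ring hom. -/
def fstHom (σ : R →+* R) : Nagata R σ M →+* R where
  toFun := Prod.fst
  map_one' := rfl
  map_mul' _ _ := rfl
  map_zero' := rfl
  map_add' _ _ := rfl

/-- The second projection as an additive hom. -/
def sndHom (σ : R →+* R) : Nagata R σ M →+ M := AddMonoidHom.snd R M

/-- The inclusion of `R` as a ring hom. -/
def inlHom (σ : R →+* R) (M : Type*) [AddCommGroup M] [Module R M] :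
    R →+* Nagata R σ M where
  toFun a := (a, 0)
  map_one' := rfl
  map_mul' a b := by
    refine Prod.ext ?_ ?_
    · rfl
    · show (0 : M) = σ a • (0 : M) + b • (0 : M)
      simp
  map_zero' := rfl
  map_add' a b := by
    refine Prod.ext ?_ ?_
    · rfl
    · show (0 : M) = (0 : M) + 0
      simp

/-- The second components of a polynomial over the Nagata extension, as a
`PolynomialModule`. -/
noncomputable def sndPM (f : Polynomial (Nagata R σ M)) : PolynomialModule R M :=
  PolynomialModule.ofCoeff R (Finsupp.mapRange Prod.snd rfl f.toFinsupp.coeff)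

lemma sndPM_apply (f : Polynomial (Nagata R σ M)) (n : ℕ) :
    (sndPM f).coeff n = (f.coeff n).2 := by
  rcases f with ⟨f⟩
  rw [Polynomial.coeff_ofFinsupp]
  exact Finsupp.mapRange_apply (hf := rfl)

lemma rsmul_apply (c : R) (n : PolynomialModule R M) (v : ℕ) :
    (c • n).coeff v = c • n.coeff v := rfl

lemma rsmul_comm (c : R) (p : Polynomial R) (x : PolynomialModule R M) :
    p • (c • x) = c • (p • x) := by
  rw [← IsScalarTower.algebraMap_smul (Polynomial R) c x,
    ← IsScalarTower.algebraMap_smul (Polynomial R) c (p • x), ← mul_smul, ← mul_smul, mul_comm]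

lemma key (f g : Polynomial (Nagata R σ M)) (k : ℕ) :
    sndHom σ ((f * g).coeff k)
      = (((f.map (fstHom σ)).map σ) • sndPM g + (g.map (fstHom σ)) • sndPM f).coeff k := by
  rw [Polynomial.coeff_mul, map_sum, PolynomialModule.coeff_add, Finsupp.add_apply, PolynomialModule.smul_apply,
    PolynomialModule.smul_apply,
    show (∑ x ∈ Finset.HasAntidiagonal.antidiagonal k, (g.map (fstHom σ)).coeff x.1 • (sndPM f).coeff x.2)
      = ∑ x ∈ Finset.HasAntidiagonal.antidiagonal k, (g.map (fstHom σ)).coeff x.2 • (sndPM f).coeff x.1 from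
      (Finset.Nat.sum_antidiagonal_swap
        (f := fun p => (g.map (fstHom σ)).coeff p.1 • (sndPM f).coeff p.2)).symm,
    ← Finset.sum_add_distrib]
  refine Finset.sum_congr rfl fun x _ => ?_
  show (f.coeff x.1 * g.coeff x.2).2 = _
  rw [mul_snd, Polynomial.coeff_map, Polynomial.coeff_map, Polynomial.coeff_map,
    sndPM_apply, sndPM_apply]
  rfl

end Nagata

end Aux

/-- A ring `S` is Armendariz if whenever polynomials over it satisfy `f * g = 0`, all
products of their coefficients vanish. -/
def IsArmendarizRing (S : Type*) [Ring S] : Prop :=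
  ∀ f g : Polynomial S, f * g = 0 → ∀ i j, f.coeff i * g.coeff j = 0

/-- An `R`-module `M` is Armendariz if whenever `m(x) f(x) = 0` in the `R[x]`-module
`M[x]`, all the products `a_j • m_i` of coefficients vanish. -/
def IsArmendarizModule (R M : Type*) [CommRing R] [AddCommGroup M] [Module R M] : Prop :=
  ∀ (m : PolynomialModule R M) (f : Polynomial R), f • m = 0 → ∀ i j, f.coeff j • m.coeff i = 0

/-- Let `R` be a commutative Armendariz ring, `σ` an endomorphism of `R`, and `M` an
`R`-module satisfying `(C_σ^2)` (`(σ a * a) • m = 0` implies `σ a • m = 0`).  Then `M` is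
an Armendariz module if and only if the Nagata extension `R ⊕_σ M` is an Armendariz
ring. -/
theorem armendariz_module_iff_nagata_armendariz
    (R : Type*) [CommRing R] (σ : R →+* R)
    (M : Type*) [AddCommGroup M] [Module R M]
    (hR : IsArmendarizRing R)
    (hC2 : ∀ (m : M) (a : R), (σ a * a) • m = 0 → σ a • m = 0) :
    IsArmendarizModule R M ↔ IsArmendarizRing (Nagata R σ M) := by
  classical
  constructor
  · -- M Armendariz → Nagata Armendariz
    intro hM f g hfg i j
    set A : Polynomial R := f.map (Nagata.fstHom σ) with hA
    set B : Polynomial R := g.map (Nagata.fstHom σ) with hB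
    set mP : PolynomialModule R M := Nagata.sndPM f with hmP
    set nP : PolynomialModule R M := Nagata.sndPM g with hnP
    have h1 : A * B = 0 := by
      rw [hA, hB, ← Polynomial.map_mul, hfg, Polynomial.map_zero]
    have hab : ∀ i j, A.coeff i * B.coeff j = 0 := hR A B h1
    have h2 : (A.map σ) • nP + B • mP = 0 := by
      refine PolynomialModule.coeff_injective (Finsupp.ext fun k => ?_)
      have := Nagata.key f g k
      rw [hfg, Polynomial.coeff_zero, map_zero] at this
      exact this.symm
    have h3 : (A * A.map σ) • nP = 0 := by
      have h := congrArg (fun x => A • x) h2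
      simp only [smul_add, smul_zero] at h
      rw [← mul_smul, ← mul_smul, h1, zero_smul, add_zero] at h
      exact h
    have h4 : ∀ v p, (A.map σ).coeff p • (A • nP).coeff v = 0 := by
      refine hM (A • nP) (A.map σ) ?_
      rw [← mul_smul, mul_comm]
      exact h3
    have h5 : ∀ i', A • (σ (A.coeff i') • nP) = 0 := by
      intro i'
      rw [Nagata.rsmul_comm]
      refine PolynomialModule.coeff_injective (Finsupp.ext fun v => ?_)
      rw [Nagata.rsmul_apply]
      have := h4 v i'
      rw [Polynomial.coeff_map] at this
      exact this
    have h7 : ∀ i' v, σ (A.coeff i') • nP.coeff v = 0 := by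
      intro i' v
      refine hC2 (nP.coeff v) (A.coeff i') ?_
      have := hM (σ (A.coeff i') • nP) A (h5 i') v i'
      rw [Nagata.rsmul_apply, smul_smul, mul_comm] at this
      exact this
    have h8 : (A.map σ) • nP = 0 := by
      refine PolynomialModule.coeff_injective (Finsupp.ext fun k => ?_)
      rw [PolynomialModule.smul_apply]
      refine Finset.sum_eq_zero fun x _ => ?_
      rw [Polynomial.coeff_map]
      exact h7 x.1 x.2
    have h9 : B • mP = 0 := by rwa [h8, zero_add] at h2
    have h10 := hM mP B h9
    refine Prod.ext ?_ ?_
    · show (f.coeff i).1 * (g.coeff j).1 = (0 : R)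
      have := hab i j
      rwa [Polynomial.coeff_map, Polynomial.coeff_map] at this
    · show σ (f.coeff i).1 • (g.coeff j).2 + (g.coeff j).1 • (f.coeff i).2 = (0 : M)
      have e1 := h7 i j
      rw [Polynomial.coeff_map, Nagata.sndPM_apply] at e1
      have e2 := h10 i j
      rw [Polynomial.coeff_map, Nagata.sndPM_apply] at e2
      rw [show Nagata.fstHom σ (f.coeff i) = (f.coeff i).1 from rfl] at e1
      rw [show Nagata.fstHom σ (g.coeff j) = (g.coeff j).1 from rfl] at e2
      rw [e1, e2, add_zero]
  · -- Nagata Armendariz → M Armendariz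
    intro hN m f hfm i j
    set F : Polynomial (Nagata R σ M) :=
      ⟨⟨Finsupp.mapRange (fun x => (((0 : R), x) : Nagata R σ M)) rfl m.coeff⟩⟩ with hFdef
    set G : Polynomial (Nagata R σ M) := f.map (Nagata.inlHom σ M) with hGdef
    have hF : ∀ n, F.coeff n = (((0 : R), m.coeff n) : Nagata R σ M) := by
      intro n
      rw [hFdef, Polynomial.coeff_ofFinsupp]
      exact Finsupp.mapRange_apply (hf := rfl)
    have hG : ∀ n, G.coeff n = ((f.coeff n, (0 : M)) : Nagata R σ M) := by
      intro n
      rw [hGdef, Polynomial.coeff_map]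
      rfl
    have hterm : ∀ x : ℕ × ℕ, F.coeff x.1 * G.coeff x.2
        = (((0 : R), f.coeff x.2 • m.coeff x.1) : Nagata R σ M) := by
      intro x
      rw [hF, hG]
      refine Prod.ext ?_ ?_
      · show (0 : R) * f.coeff x.2 = 0
        ring
      · show σ (0 : R) • (0 : M) + f.coeff x.2 • m.coeff x.1 = f.coeff x.2 • m.coeff x.1
        simp
    have hFG : F * G = 0 := by
      ext k
      rw [Polynomial.coeff_mul, Polynomial.coeff_zero]
      refine Prod.ext ?_ ?_
      · show Nagata.fstHom σ (∑ x ∈ Finset.HasAntidiagonal.antidiagonal k, F.coeff x.1 * G.coeff x.2) = (0 : R)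
        rw [map_sum]
        refine Finset.sum_eq_zero fun x _ => ?_
        rw [hterm x]
        rfl
      · show Nagata.sndHom σ (∑ x ∈ Finset.HasAntidiagonal.antidiagonal k, F.coeff x.1 * G.coeff x.2) = (0 : M)
        rw [map_sum]
        have : ∀ x ∈ Finset.HasAntidiagonal.antidiagonal k,
            Nagata.sndHom σ (F.coeff x.1 * G.coeff x.2) = f.coeff x.2 • m.coeff x.1 := by
          intro x _
          rw [hterm x]
          rfl
        rw [Finset.sum_congr rfl this]
        have swap := Finset.Nat.sum_antidiagonal_swap
          (f := fun p : ℕ × ℕ => f.coeff p.1 • m.coeff p.2) (n := k)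
        have hk := congrFun (congrArg DFunLike.coe (congrArg PolynomialModule.coeff hfm)) k
        rw [PolynomialModule.smul_apply] at hk
        calc ∑ x ∈ Finset.HasAntidiagonal.antidiagonal k, f.coeff x.2 • m.coeff x.1
            = ∑ x ∈ Finset.HasAntidiagonal.antidiagonal k, f.coeff x.1 • m.coeff x.2 := swap
          _ = 0 := hk
    have := hN F G hFG i j
    have h2 : σ (F.coeff i).1 • (G.coeff j).2 + (G.coeff j).1 • (F.coeff i).2 = (0 : M) :=
      congrArg Prod.snd this
    rw [hF, hG] at h2
    simpa using h2
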